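/- Let T : ℤ² → ℤ² be the linear map T(a,b) = (a+b, a). Then the union over m ≥ 0 of T^{-m}(ℤ₊ × ℤ₊) (preimages under the m-th iterate, equivalently images of the positive quadrant under the inverse iterates) equals { (a,b) ∈ ℤ² : φ·a + b ≥ 0 } where φ = (1+√5)/2. -/

import Mathlib

open Real goldenRatio

private noncomputable abbrev Tmap : ℤ × ℤ → ℤ × ℤ := fun p => (p.1 + p.2, p.1)

private lemma iterate_pair (a b : ℤ) (m : ℕ) :
    Tmap^[m + 1] (a, b) =
      (Nat.fib (m + 2) * a + Nat.fib (m + 1) * b, Nat.fib (m + 1) * a + Nat.fib m * b) := by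
  induction m with
  | zero => simp [Tmap]
  | succ k ih =>
      rw [Function.iterate_succ_apply', ih]
      simp only [Tmap, Nat.fib_add_two, Prod.mk.injEq]
      push_cast
      exact ⟨by ring, trivial⟩

private lemma invariant (a b : ℤ) (m : ℕ) :
    φ * ((Tmap^[m] (a, b)).1 : ℝ) + ((Tmap^[m] (a, b)).2 : ℝ)
      = φ ^ m * (φ * a + b) := by
  induction m with
  | zero => simp
  | succ k ih =>
      rw [Function.iterate_succ_apply']
      have hsq : φ ^ 2 = φ + 1 := goldenRatio_sq
      simp only [Tmap]
      push_cast
      linear_combination φ * ih - ((Tmap^[k] (a, b)).1 : ℝ) * hsq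

private lemma fib_succ_real (k : ℕ) :
    (Nat.fib (k + 1) : ℝ) = φ * Nat.fib k + ψ ^ k := by
  have := fib_succ_sub_goldenRatio_mul_fib k
  linarith

theorem penrose_positive_cone_limit :
    (⋃ m : ℕ,
        (fun p : ℤ × ℤ => (p.1 + p.2, p.1))^[m] ⁻¹'
          {p : ℤ × ℤ | 0 ≤ p.1 ∧ 0 ≤ p.2}) =
      {p : ℤ × ℤ | 0 ≤ (1 + Real.sqrt 5) / 2 * (p.1 : ℝ) + (p.2 : ℝ)} := by
  have hTmap : (fun p : ℤ × ℤ => (p.1 + p.2, p.1)) = Tmap := rfl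
  ext ⟨a, b⟩
  simp only [hTmap, Set.mem_iUnion, Set.mem_preimage, Set.mem_setOf_eq]
  constructor
  · rintro ⟨m, h1, h2⟩
    have key := invariant a b m
    have hpos : (0:ℝ) < φ ^ m := pow_pos goldenRatio_pos m
    have hx : (0:ℝ) ≤ ((Tmap^[m] (a, b)).1 : ℝ) := by exact_mod_cast h1
    have hy : (0:ℝ) ≤ ((Tmap^[m] (a, b)).2 : ℝ) := by exact_mod_cast h2
    have hprod : (0:ℝ) ≤ φ ^ m * (φ * a + b) := by
      rw [← key]
      have := goldenRatio_pos
      positivity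
    have : (0:ℝ) ≤ φ * a + b := nonneg_of_mul_nonneg_right hprod hpos
    exact this
  · intro h
    have h' : (0:ℝ) ≤ φ * a + b := h
    rcases eq_or_lt_of_le h' with heq | hlt
    · -- φ a + b = 0 forces a = b = 0
      have ha : a = 0 := by
        by_contra ha
        have ha' : (a : ℝ) ≠ 0 := Int.cast_ne_zero.mpr ha
        have hφ : φ = ((-b : ℤ) : ℝ) / ((a : ℤ) : ℝ) := by
          have heq' : (0:ℝ) = (1 + √5) / 2 * a + b := heq
          field_simp
          push_cast
          linarith [heq']
        exact (irrational_iff_ne_rational φ).mp goldenRatio_irrational (-b) a ha hφ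
      have hb : b = 0 := by
        have hb' : (b : ℝ) = 0 := by
          rw [ha] at heq; push_cast at heq; linarith
        exact_mod_cast hb'
      exact ⟨0, by simp [ha, hb]⟩
    · set D : ℝ := φ * a + b with hD
      obtain ⟨n, hn⟩ := exists_nat_gt (|(a : ℝ)| / D)
      set N : ℕ := max n 5 with hN
      have hpsi_abs : |ψ| ≤ 1 := by
        rw [abs_le]
        exact ⟨by linarith [neg_one_lt_goldenConj], by linarith [goldenConj_neg]⟩
      have hck : ∀ k, N ≤ k → 0 ≤ (Nat.fib (k + 1) : ℤ) * a + (Nat.fib k : ℤ) * b := by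
        intro k hk
        have h5 : 5 ≤ k := le_trans (le_max_right n 5) hk
        have hfib : (k : ℝ) ≤ Nat.fib k := by exact_mod_cast Nat.le_fib_self h5
        have hreal : (((Nat.fib (k + 1) : ℤ) * a + (Nat.fib k : ℤ) * b : ℤ) : ℝ)
            = (Nat.fib k : ℝ) * D + ψ ^ k * a := by
          push_cast
          rw [fib_succ_real, hD]
          ring
        have habs : |ψ ^ k * (a:ℝ)| ≤ |(a : ℝ)| := by
          rw [abs_mul, abs_pow]
          have h1 : |ψ| ^ k ≤ 1 := pow_le_one₀ (abs_nonneg _) hpsi_abs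
          calc |ψ| ^ k * |(a:ℝ)| ≤ 1 * |(a:ℝ)| := by
                exact mul_le_mul_of_nonneg_right h1 (abs_nonneg _)
            _ = |(a:ℝ)| := one_mul _
        have hnk : |(a : ℝ)| / D < k := by
          calc |(a : ℝ)| / D < n := hn
            _ ≤ N := by exact_mod_cast le_max_left n 5
            _ ≤ k := by exact_mod_cast hk
        have haD : |(a : ℝ)| < (k : ℝ) * D := by
          rw [div_lt_iff₀ hlt] at hnk
          linarith
        have hfD : (k : ℝ) * D ≤ (Nat.fib k : ℝ) * D :=
          mul_le_mul_of_nonneg_right hfib hlt.le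
        have : (0:ℝ) ≤ (((Nat.fib (k + 1) : ℤ) * a + (Nat.fib k : ℤ) * b : ℤ) : ℝ) := by
          rw [hreal]
          have h2 : -|(a:ℝ)| ≤ ψ ^ k * a := neg_abs_le _ |>.trans' (neg_le_neg habs)
          linarith
        exact_mod_cast this
      refine ⟨N + 1, ?_, ?_⟩
      · rw [iterate_pair]
        exact hck (N + 1) (Nat.le_succ N)
      · rw [iterate_pair]
        exact hck N le_rfl
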